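/- Let R be a commutative ring. The fully faithful functor 𝖳 : R-mod → Fun(Γ₊,R) admits a left adjoint 𝖰 : Fun(Γ₊,R) → R-mod, and the counit of the adjunction 𝖰(𝖳(M)) → M is an isomorphism for every R-module M. -/

import Mathlib

open CategoryTheory Limits

/-- `Γ₊`: the category of finite pointed sets. -/
abbrev GammaPlus : Type 1 := CategoryTheory.ObjectProperty.FullSubcategory (fun X : Pointed => Finite X.X)

/-- `[n]₊ ∈ Γ₊`: the pointed set with `n` non-basepoint elements and basepoint `o = none`. -/
def GammaPlus.of (n : ℕ) : GammaPlus := ⟨⟨Option (Fin n), none⟩, inferInstance⟩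

/-- The set of non-basepoint elements of a finite pointed set. -/
def GammaPlus.nb (S : GammaPlus) : Type := {s : S.obj.X // s ≠ S.obj.point}

variable (R : Type) [CommRing R]

open Classical in
/-- The linear map underlying the action of `𝖳(M)` on a pointed map `f : S ⟶ S'`:
the summand indexed by `s` is sent (identically) to the summand indexed by `f(s)`,
and to zero if `f(s) = o`. -/
noncomputable def spanTMapAux (M : ModuleCat R) {S S' : GammaPlus} (f : S ⟶ S') :
    (GammaPlus.nb S →₀ M) →ₗ[R] (GammaPlus.nb S' →₀ M) :=
  Finsupp.lsum R fun s =>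
    if h : f.hom.toFun s.1 ≠ S'.obj.point then Finsupp.lsingle (⟨f.hom.toFun s.1, h⟩ : GammaPlus.nb S')
    else 0

open Classical in
lemma spanTMapAux_single (M : ModuleCat R) {S S' : GammaPlus} (f : S ⟶ S') (s : GammaPlus.nb S)
    (m : M) :
    spanTMapAux R M f (Finsupp.single s m) =
      if h : f.hom.toFun s.1 ≠ S'.obj.point then Finsupp.single (⟨f.hom.toFun s.1, h⟩ : GammaPlus.nb S') m
      else 0 := by
  unfold spanTMapAux
  rw [Finsupp.lsum_single]
  split_ifs with h <;> rfl

lemma spanTMapAux_id (M : ModuleCat R) (S : GammaPlus) :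
    spanTMapAux R M (𝟙 S) = LinearMap.id := by
  apply Finsupp.lhom_ext
  intro s m
  rw [spanTMapAux_single, LinearMap.id_apply]
  split_ifs with h
  · rfl
  · exact absurd s.2 h

lemma spanTMapAux_comp (M : ModuleCat R) {S S' S'' : GammaPlus} (f : S ⟶ S') (g : S' ⟶ S'') :
    spanTMapAux R M (f ≫ g) = (spanTMapAux R M g).comp (spanTMapAux R M f) := by
  apply Finsupp.lhom_ext
  intro s m
  rw [LinearMap.comp_apply, spanTMapAux_single, spanTMapAux_single]
  by_cases h1 : f.hom.toFun s.1 ≠ S'.obj.point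
  · rw [dif_pos h1]
    refine Eq.trans ?_ (spanTMapAux_single R M g ⟨_, h1⟩ m).symm
    split_ifs with hA hB hB
    · rfl
    · exact absurd hA hB
    · exact absurd hB hA
    · rfl
  · rw [dif_neg h1]
    refine Eq.trans ?_ (map_zero (spanTMapAux R M g)).symm
    have hg : g.hom.toFun (f.hom.toFun s.1) = S''.obj.point := by
      rw [not_not.mp h1]; exact g.hom.map_point
    split_ifs with hA
    · exact absurd hg hA
    · rfl

lemma spanTMapAux_natural {M N : ModuleCat R} (φ : M ⟶ N) {S S' : GammaPlus} (f : S ⟶ S') :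
    (Finsupp.mapRange.linearMap (α := GammaPlus.nb S') φ.hom).comp (spanTMapAux R M f)
      = (spanTMapAux R N f).comp (Finsupp.mapRange.linearMap φ.hom) := by
  apply Finsupp.lhom_ext
  intro s m
  rw [LinearMap.comp_apply, LinearMap.comp_apply, spanTMapAux_single,
    Finsupp.mapRange.linearMap_apply]
  erw [Finsupp.mapRange.linearMap_apply,
    Finsupp.mapRange_single, spanTMapAux_single]
  by_cases h : f.hom.toFun s.1 ≠ S'.obj.point
  · rw [dif_pos h, dif_pos h]
    exact Finsupp.mapRange_single
  · rw [dif_neg h, dif_neg h]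
    exact Finsupp.mapRange_zero

/-- The functor `𝖳 : R-mod ⥤ Fun(Γ₊, R)`, with `𝖳(M)(S) = ⊕_{s ∈ S∖{o}} M`;
a pointed map `f` sends the summand indexed by `s` identically to the summand indexed
by `f(s)`, and to zero if `f(s) = o`. -/
noncomputable def spanT : ModuleCat R ⥤ (GammaPlus ⥤ ModuleCat R) where
  obj M :=
    { obj := fun S => ModuleCat.of R (GammaPlus.nb S →₀ M)
      map := fun f => ModuleCat.ofHom (spanTMapAux R M f)
      map_id := fun S => ModuleCat.hom_ext (spanTMapAux_id R M S)
      map_comp := fun f g => ModuleCat.hom_ext (spanTMapAux_comp R M f g) }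
  map {M N} φ :=
    { app := fun S => ModuleCat.ofHom (Finsupp.mapRange.linearMap φ.hom)
      naturality := fun {S S'} f => ModuleCat.hom_ext (spanTMapAux_natural R φ f) }
  map_id M := by
    ext S : 2
    exact ModuleCat.hom_ext Finsupp.mapRange.linearMap_id
  map_comp φ ψ := by
    ext S : 2
    exact ModuleCat.hom_ext (Finsupp.mapRange.linearMap_comp _ _)

/-- The reduced span functor `T ∈ Fun(Γ₊, R)`, `T(S) = ⊕_{s ∈ S∖{o}} R`. -/
noncomputable def reducedSpan : GammaPlus ⥤ ModuleCat R := (spanT R).obj (ModuleCat.of R R)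

/-! ### Auxiliary constructions for the left adjoint -/

noncomputable instance (S : GammaPlus) : Fintype (GammaPlus.nb S) :=
  haveI : Finite S.obj.X := S.property
  haveI : Finite (GammaPlus.nb S) := by unfold GammaPlus.nb; exact Subtype.finite
  Fintype.ofFinite _

open Classical in
/-- collapse: sends `s` to `some 0` and everything else to the basepoint -/
noncomputable def deltaMap {S : GammaPlus} (s : GammaPlus.nb S) : S ⟶ GammaPlus.of 1 :=
  ObjectProperty.homMk (Pointed.Hom.mk (fun t => if t = s.1 then some 0 else none)
    (by dsimp; exact if_neg (fun h => s.2 h.symm)))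

/-- inclusion of the one-point set hitting `s` -/
def iotaMap {S : GammaPlus} (s : GammaPlus.nb S) : GammaPlus.of 1 ⟶ S :=
  ObjectProperty.homMk (Pointed.Hom.mk (fun t => t.elim S.obj.point (fun _ => s.1)) rfl)

def ePt : GammaPlus.nb (GammaPlus.of 1) := ⟨some 0, Option.some_ne_none 0⟩

instance : Unique (GammaPlus.nb (GammaPlus.of 1)) where
  default := ePt
  uniq x := by
    obtain ⟨x, hx⟩ := x
    cases x with
    | none => exact absurd rfl hx
    | some a => exact Subtype.ext (congrArg some (Subsingleton.elim a 0))

open Classical in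
lemma deltaMap_toFun_eq_iff {S : GammaPlus} (s : GammaPlus.nb S) (t : S.obj.X) :
    (deltaMap s).hom.toFun t = some 0 ↔ t = s.1 := by
  unfold deltaMap
  dsimp
  by_cases h : t = s.1 <;> simp [h] <;> rfl

open Classical in
lemma deltaMap_e : deltaMap ePt = 𝟙 (GammaPlus.of 1) := by
  apply ObjectProperty.hom_ext
  apply Pointed.Hom.ext
  funext t
  show (if t = ePt.1 then some 0 else none) = t
  cases t with
  | none => exact if_neg (fun h => Option.some_ne_none (0 : Fin 1) h.symm)
  | some a => rw [Subsingleton.elim a 0]; exact if_pos rfl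

open Classical in
lemma spanTMapAux_coord (M : ModuleCat R) {S S' : GammaPlus} (f : S ⟶ S')
    (v : GammaPlus.nb S →₀ M) (s' : GammaPlus.nb S') :
    spanTMapAux R M f v s' =
      ∑ s : GammaPlus.nb S, if f.hom.toFun s.1 = s'.1 then v s else 0 := by
  induction v using Finsupp.induction_linear with
  | zero => simp
  | add u w hu hw =>
      rw [map_add, Finsupp.add_apply, hu, hw, ← Finset.sum_add_distrib]
      exact Finset.sum_congr rfl (fun s _ => by split <;> simp [Finsupp.add_apply])
  | single t m =>
      rw [spanTMapAux_single, Finset.sum_eq_single t]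
      · rw [Finsupp.single_eq_same]
        by_cases h1 : f.hom.toFun t.1 ≠ S'.obj.point
        · rw [dif_pos h1]
          by_cases h2 : f.hom.toFun t.1 = s'.1
          · rw [if_pos h2,
              show (⟨f.hom.toFun t.1, h1⟩ : GammaPlus.nb S') = s' from Subtype.ext h2]
            exact Finsupp.single_eq_same
          · rw [if_neg h2]
            exact Finsupp.single_eq_of_ne (fun hh => h2 (congrArg Subtype.val hh).symm)
        · rw [dif_neg h1, if_neg (fun h2 => s'.2 (h2.symm.trans (not_not.mp h1)))]
          rfl
      · intro b _ hb
        rw [Finsupp.single_eq_of_ne hb]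
        exact ite_self 0
      · intro h
        exact absurd (Finset.mem_univ t) h

open Classical in
lemma spanTMapAux_deltaMap_e (M : ModuleCat R) {S : GammaPlus} (s : GammaPlus.nb S)
    (v : GammaPlus.nb S →₀ M) :
    spanTMapAux R M (deltaMap s) v ePt = v s := by
  rw [spanTMapAux_coord]
  have h : ∀ t : GammaPlus.nb S,
      (if (deltaMap s).hom.toFun t.1 = ePt.1 then v t else 0) = if t = s then v t else 0 := by
    intro t
    exact if_congr ((deltaMap_toFun_eq_iff s t.1).trans
      ⟨fun h => Subtype.ext h, fun h => congrArg Subtype.val h⟩) rfl rfl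
  rw [Finset.sum_congr rfl (fun t _ => h t), Finset.sum_ite_eq' Finset.univ s]
  simp

open Classical in
/-- The submodule of relations: for every `g : S ⟶ [1]₊`, the action of `g` is identified
with the sum of the actions of the collapse maps `δₛ` over `s ∈ g⁻¹(1)`. -/
noncomputable def relSub (F : GammaPlus ⥤ ModuleCat R) :
    Submodule R (F.obj (GammaPlus.of 1)) :=
  Submodule.span R {z | ∃ (S : GammaPlus) (g : S ⟶ GammaPlus.of 1) (y : F.obj S),
    z = F.map g y -
      ∑ s : GammaPlus.nb S, if g.hom.toFun s.1 = some 0 then F.map (deltaMap s) y else 0}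

open Classical in
lemma rel_eq {F : GammaPlus ⥤ ModuleCat R} {M : ModuleCat R}
    (x : F.obj (GammaPlus.of 1) →ₗ[R] M) (hx : relSub R F ≤ LinearMap.ker x)
    {S : GammaPlus} (g : S ⟶ GammaPlus.of 1) (y : F.obj S) :
    x ((F.map g).hom y) =
      ∑ s : GammaPlus.nb S, if g.hom.toFun s.1 = some 0 then x ((F.map (deltaMap s)).hom y) else 0 := by
  have h := hx (Submodule.subset_span ⟨S, g, y, rfl⟩)
  rw [LinearMap.mem_ker, map_sub, sub_eq_zero] at h
  rw [h, map_sum]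
  exact Finset.sum_congr rfl (fun s _ => by split <;> simp

)

open Classical in
noncomputable def toNatApp (F : GammaPlus ⥤ ModuleCat R) (M : ModuleCat R)
    (x : F.obj (GammaPlus.of 1) →ₗ[R] M) (S : GammaPlus) :
    F.obj S →ₗ[R] (GammaPlus.nb S →₀ M) :=
  (Finsupp.linearEquivFunOnFinite R M (GammaPlus.nb S)).symm.toLinearMap.comp
    (LinearMap.pi (fun s => x.comp (F.map (deltaMap s)).hom))

lemma toNatApp_apply (F : GammaPlus ⥤ ModuleCat R) (M : ModuleCat R)
    (x : F.obj (GammaPlus.of 1) →ₗ[R] M) (S : GammaPlus) (y : F.obj S) (s : GammaPlus.nb S) :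
    toNatApp R F M x S y s = x ((F.map (deltaMap s)).hom y) := rfl

open Classical in
lemma toNatApp_natural (F : GammaPlus ⥤ ModuleCat R) (M : ModuleCat R)
    (x : F.obj (GammaPlus.of 1) →ₗ[R] M) (hx : relSub R F ≤ LinearMap.ker x)
    {S S' : GammaPlus} (f : S ⟶ S') (y : F.obj S) :
    toNatApp R F M x S' ((F.map f).hom y) = spanTMapAux R M f (toNatApp R F M x S y) := by
  apply Finsupp.ext
  intro s'
  rw [toNatApp_apply, spanTMapAux_coord]
  have h1 : (F.map (deltaMap s')).hom ((F.map f).hom y) = (F.map (f ≫ deltaMap s')).hom y := by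
    rw [F.map_comp]; rfl
  rw [h1, rel_eq R x hx (f ≫ deltaMap s') y]
  refine Finset.sum_congr rfl (fun s _ => ?_)
  rw [toNatApp_apply]
  exact if_congr (deltaMap_toFun_eq_iff s' (f.hom.toFun s.1)) rfl rfl

open Classical in
lemma relSub_le_comap {F G : GammaPlus ⥤ ModuleCat R} (η : F ⟶ G) :
    relSub R F ≤ Submodule.comap (η.app (GammaPlus.of 1)).hom (relSub R G) := by
  rw [relSub, Submodule.span_le]
  rintro z ⟨S, g, y, rfl⟩
  have hn : ∀ (h : S ⟶ GammaPlus.of 1),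
      (η.app (GammaPlus.of 1)).hom ((F.map h).hom y) = (G.map h).hom ((η.app S).hom y) :=
    fun h => LinearMap.congr_fun (congrArg ModuleCat.Hom.hom (η.naturality h)) y
  simp only [SetLike.mem_coe, Submodule.mem_comap, map_sub, map_sum]
  have h2 : ∀ s : GammaPlus.nb S,
      (η.app (GammaPlus.of 1)).hom (if g.hom.toFun s.1 = some 0 then (F.map (deltaMap s)).hom y else 0)
        = (if g.hom.toFun s.1 = some 0 then (G.map (deltaMap s)).hom ((η.app S).hom y) else 0) := by
    intro s
    split
    · exact hn (deltaMap s)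
    · exact map_zero _
  rw [hn g, Finset.sum_congr rfl (fun s _ => h2 s)]
  exact Submodule.subset_span ⟨S, g, (η.app S).hom y, rfl⟩

/-- The left adjoint `𝖰`: `F` is sent to `F([1]₊)` modulo the relation submodule. -/
noncomputable def QFun : (GammaPlus ⥤ ModuleCat R) ⥤ ModuleCat R where
  obj F := ModuleCat.of R (F.obj (GammaPlus.of 1) ⧸ relSub R F)
  map {F G} η := ModuleCat.ofHom (Submodule.mapQ _ _ (η.app (GammaPlus.of 1)).hom (relSub_le_comap R η))
  map_id _ := ModuleCat.hom_ext (Submodule.linearMap_qext _ (LinearMap.ext fun _ => rfl))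
  map_comp _ _ := ModuleCat.hom_ext (Submodule.linearMap_qext _ (LinearMap.ext fun _ => rfl))

lemma comp_mkQ_ker {F : GammaPlus ⥤ ModuleCat R} {M : ModuleCat R}
    (x : (QFun R).obj F ⟶ M) :
    relSub R F ≤ LinearMap.ker (x.hom.comp (relSub R F).mkQ) := by
  intro z hz
  have h0 : (relSub R F).mkQ z = 0 := (Submodule.Quotient.mk_eq_zero _).2 hz
  rw [LinearMap.mem_ker]; show x.hom ((relSub R F).mkQ z) = 0
  exact (congrArg _ h0).trans (map_zero _)

/-- `α.app S`, retyped as a bare linear map into the finsupp module. -/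
noncomputable def appL {F : GammaPlus ⥤ ModuleCat R} {M : ModuleCat R}
    (α : F ⟶ (spanT R).obj M) (S : GammaPlus) :
    F.obj S →ₗ[R] (GammaPlus.nb S →₀ M) := (α.app S).hom

lemma appL_natural {F : GammaPlus ⥤ ModuleCat R} {M : ModuleCat R}
    (α : F ⟶ (spanT R).obj M) {S S' : GammaPlus} (f : S ⟶ S') (y : F.obj S) :
    appL R α S' ((F.map f).hom y) = spanTMapAux R M f (appL R α S y) :=
  LinearMap.congr_fun (congrArg ModuleCat.Hom.hom (α.naturality f)) y

open Classical in
lemma lapply_comp_ker {F : GammaPlus ⥤ ModuleCat R} {M : ModuleCat R}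
    (α : F ⟶ (spanT R).obj M) :
    relSub R F ≤ LinearMap.ker
      ((Finsupp.lapply ePt : (GammaPlus.nb (GammaPlus.of 1) →₀ M) →ₗ[R] M).comp
        (α.app (GammaPlus.of 1)).hom) := by
  rw [relSub, Submodule.span_le]
  rintro z ⟨S, g, y, rfl⟩
  rw [SetLike.mem_coe, LinearMap.mem_ker]
  show (Finsupp.lapply ePt : (GammaPlus.nb (GammaPlus.of 1) →₀ M) →ₗ[R] M)
      (appL R α (GammaPlus.of 1) ((F.map g).hom y -
        ∑ s : GammaPlus.nb S, if g.hom.toFun s.1 = some 0 then (F.map (deltaMap s)).hom y else 0)) = 0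
  rw [map_sub, map_sub, map_sum, map_sum, sub_eq_zero, appL_natural R α g y,
    Finsupp.lapply_apply, spanTMapAux_coord]
  refine Finset.sum_congr rfl (fun s _ => ?_)
  by_cases hc : g.hom.toFun s.1 = some 0
  · rw [if_pos (show g.hom.toFun s.1 = ePt.1 from hc), if_pos hc,
      appL_natural R α (deltaMap s) y, Finsupp.lapply_apply, spanTMapAux_deltaMap_e]
  · rw [if_neg (show ¬ (g.hom.toFun s.1 = ePt.1) from hc), if_neg hc, map_zero, map_zero]

/-- The adjunction `𝖰 ⊣ 𝖳`. -/
noncomputable def adjQ : QFun R ⊣ spanT R :=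
  Adjunction.mkOfHomEquiv
    { homEquiv := fun F M =>
        { toFun := fun x =>
            { app := fun S => ModuleCat.ofHom (toNatApp R F M (x.hom.comp (relSub R F).mkQ) S)
              naturality := fun {S S'} f => by
                apply ModuleCat.hom_ext
                apply LinearMap.ext
                intro y
                exact toNatApp_natural R F M _ (comp_mkQ_ker R x) f y }
          invFun := fun α => ModuleCat.ofHom (Submodule.liftQ _
            ((Finsupp.lapply ePt : (GammaPlus.nb (GammaPlus.of 1) →₀ M) →ₗ[R] M).comp
              (α.app (GammaPlus.of 1)).hom) (lapply_comp_ker R α))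
          left_inv := fun x => by
            apply ModuleCat.hom_ext
            refine Submodule.linearMap_qext _ ?_
            apply LinearMap.ext
            intro y
            show (Finsupp.lapply ePt : (GammaPlus.nb (GammaPlus.of 1) →₀ M) →ₗ[R] M)
              (toNatApp R F M (x.hom.comp (relSub R F).mkQ) (GammaPlus.of 1) y)
              = x.hom ((relSub R F).mkQ y)
            rw [Finsupp.lapply_apply, toNatApp_apply, deltaMap_e, F.map_id]
            rfl
          right_inv := fun α => by
            apply NatTrans.ext
            funext S
            apply ModuleCat.hom_ext
            show toNatApp R F M
                ((Submodule.liftQ _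
                  ((Finsupp.lapply ePt : (GammaPlus.nb (GammaPlus.of 1) →₀ M) →ₗ[R] M).comp
                    (α.app (GammaPlus.of 1)).hom) (lapply_comp_ker R α) : _ →ₗ[R] M).comp
                  (relSub R F).mkQ) S
              = appL R α S
            apply LinearMap.ext
            intro y
            apply Finsupp.ext
            intro s
            rw [toNatApp_apply]
            show (Finsupp.lapply ePt : (GammaPlus.nb (GammaPlus.of 1) →₀ M) →ₗ[R] M)
                (appL R α (GammaPlus.of 1) ((F.map (deltaMap s)).hom y)) = appL R α S y s
            rw [appL_natural R α (deltaMap s) y, Finsupp.lapply_apply,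
              spanTMapAux_deltaMap_e] }
      homEquiv_naturality_left_symm := fun {F' F M} η α =>
        ModuleCat.hom_ext (Submodule.linearMap_qext _ (LinearMap.ext fun y => rfl))
      homEquiv_naturality_right := fun {F M M'} x g => by
        apply NatTrans.ext
        funext S
        apply ModuleCat.hom_ext
        apply LinearMap.ext
        intro y
        apply Finsupp.ext
        intro s
        rfl }

instance spanT_faithful : (spanT R).Faithful where
  map_injective {M N} := by
    intro φ ψ h
    apply ModuleCat.hom_ext
    apply LinearMap.ext
    intro m
    have h1 : (Finsupp.mapRange.linearMap (α := GammaPlus.nb (GammaPlus.of 1)) φ.hom)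
          (Finsupp.single ePt m)
        = (Finsupp.mapRange.linearMap (α := GammaPlus.nb (GammaPlus.of 1)) ψ.hom)
          (Finsupp.single ePt m) :=
      LinearMap.congr_fun
        (congrArg (fun (η : (spanT R).obj M ⟶ (spanT R).obj N) => (η.app (GammaPlus.of 1)).hom) h)
        (Finsupp.single ePt m)
    rw [Finsupp.mapRange.linearMap_apply, Finsupp.mapRange.linearMap_apply,
      Finsupp.mapRange_single, Finsupp.mapRange_single] at h1
    exact Finsupp.single_injective ePt h1

open Classical in
lemma spanTMapAux_iota (M : ModuleCat R) {S : GammaPlus} (s : GammaPlus.nb S) (m : M) :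
    spanTMapAux R M (iotaMap s) (Finsupp.single ePt m) = Finsupp.single s m := by
  rw [spanTMapAux_single]
  rw [dif_pos (show (iotaMap s).hom.toFun ePt.1 ≠ S.obj.point from s.2)]
  exact congrArg (fun t => Finsupp.single t m) (Subtype.ext rfl)

instance spanT_full : (spanT R).Full where
  map_surjective {M N} := by
    intro η
    refine ⟨ModuleCat.ofHom ((Finsupp.lapply ePt : (GammaPlus.nb (GammaPlus.of 1) →₀ N) →ₗ[R] N).comp
      ((appL R η (GammaPlus.of 1)).comp (Finsupp.lsingle ePt))), ?_⟩
    apply NatTrans.ext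
    funext S
    apply ModuleCat.hom_ext
    show Finsupp.mapRange.linearMap
        ((Finsupp.lapply ePt : (GammaPlus.nb (GammaPlus.of 1) →₀ N) →ₗ[R] N).comp
          ((appL R η (GammaPlus.of 1)).comp (Finsupp.lsingle ePt)))
      = appL R η S
    apply Finsupp.lhom_ext
    intro s m
    have hy := spanTMapAux_iota R M s m
    have hnat : appL R η S (spanTMapAux R M (iotaMap s) (Finsupp.single ePt m))
        = spanTMapAux R N (iotaMap s) (appL R η (GammaPlus.of 1) (Finsupp.single ePt m)) :=
      appL_natural R η (iotaMap s) _
    have hu : appL R η (GammaPlus.of 1) (Finsupp.single ePt m)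
        = Finsupp.single ePt (appL R η (GammaPlus.of 1) (Finsupp.single ePt m) ePt) :=
      Finsupp.unique_single _
    rw [Finsupp.mapRange.linearMap_apply, Finsupp.mapRange_single]
    exact (((congrArg (appL R η S) hy.symm).trans hnat).trans
      ((congrArg (spanTMapAux R N (iotaMap s)) hu).trans (spanTMapAux_iota R N s _))).symm
/-- The fully faithful functor `𝖳 : R-mod ⥤ Fun(Γ₊, R)` admits a left adjoint
`𝖰 : Fun(Γ₊, R) ⥤ R-mod`, and the counit `𝖰(𝖳(M)) ⟶ M` of the adjunction is an
isomorphism for every `R`-module `M`. -/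
theorem spanT_has_left_adjoint_counit_iso (R : Type) [CommRing R] :
    (spanT R).Full ∧ (spanT R).Faithful ∧
    ∃ (Q : (GammaPlus ⥤ ModuleCat R) ⥤ ModuleCat R) (adj : Q ⊣ spanT R),
      ∀ M : ModuleCat R, IsIso (adj.counit.app M) := by
  refine ⟨spanT_full R, spanT_faithful R, QFun R, adjQ R, fun M => ?_⟩
  infer_instance
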